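/- Suppose δ, μ, τ are positive reals, 0 < R0 ≤ 1, and λ ∈ ℂ satisfies F(λ) = 0 with Re λ ≥ 0. Then R0 = 1 and λ = 0. In particular, if R0 < 1 every complex root of F has strictly negative real part. -/

import Mathlib

lemma aux_abs_lb (lam : ℂ) (c : ℝ) (hc : 0 < c) (hre : 0 ≤ lam.re) :
    c ≤ ‖lam + (c:ℂ)‖ := by
  have h1 : c ≤ (lam + (c:ℂ)).re := by simp; linarith
  calc c ≤ (lam + (c:ℂ)).re := h1
    _ ≤ |(lam + (c:ℂ)).re| := le_abs_self _
    _ ≤ ‖lam + (c:ℂ)‖ := Complex.abs_re_le_norm _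

/-- If 0 < R0 ≤ 1 and λ ∈ ℂ satisfies F(λ) = 0 with Re λ ≥ 0,
then R0 = 1 and λ = 0. In particular, if R0 < 1 every complex root of F has
strictly negative real part. -/
theorem characteristic_roots_of_R0_le_one
    (δ μ τ R0 : ℝ) (hδ : 0 < δ) (hμ : 0 < μ) (hτ : 0 < τ)
    (hR0 : 0 < R0) (hR0le : R0 ≤ 1) :
    (∀ lam : ℂ,
      lam ^ 2 + ((δ : ℂ) + (μ : ℂ)) * lam + (δ : ℂ) * (μ : ℂ)
        - (R0 : ℂ) * (δ : ℂ) * (μ : ℂ) * Complex.exp (-lam * (τ : ℂ)) = 0 →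
      0 ≤ lam.re → R0 = 1 ∧ lam = 0) ∧
    (R0 < 1 → ∀ lam : ℂ,
      lam ^ 2 + ((δ : ℂ) + (μ : ℂ)) * lam + (δ : ℂ) * (μ : ℂ)
        - (R0 : ℂ) * (δ : ℂ) * (μ : ℂ) * Complex.exp (-lam * (τ : ℂ)) = 0 →
      lam.re < 0) := by
  have main : ∀ lam : ℂ,
      lam ^ 2 + ((δ : ℂ) + (μ : ℂ)) * lam + (δ : ℂ) * (μ : ℂ)
        - (R0 : ℂ) * (δ : ℂ) * (μ : ℂ) * Complex.exp (-lam * (τ : ℂ)) = 0 →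
      0 ≤ lam.re → R0 = 1 ∧ lam = 0 := by
    intro lam heq hre
    have key : (lam + (δ:ℂ)) * (lam + (μ:ℂ))
        = (R0:ℂ) * δ * μ * Complex.exp (-lam * τ) := by
      linear_combination heq
    have habs := congrArg (‖·‖) key
    rw [norm_mul, norm_mul, norm_mul, norm_mul, Complex.norm_exp] at habs
    rw [Complex.norm_real, Complex.norm_real, Complex.norm_real, Real.norm_eq_abs, Real.norm_eq_abs, Real.norm_eq_abs] at habs
    rw [abs_of_pos hR0, abs_of_pos hδ, abs_of_pos hμ] at habs
    have hrepart : (-lam * (τ:ℂ)).re = -(lam.re * τ) := by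
      simp [Complex.mul_re]
    rw [hrepart] at habs
    set a := ‖lam + (δ:ℂ)‖ with ha'
    set b := ‖lam + (μ:ℂ)‖ with hb'
    have ha : δ ≤ a := aux_abs_lb lam δ hδ hre
    have hb : μ ≤ b := aux_abs_lb lam μ hμ hre
    have hE : Real.exp (-(lam.re * τ)) ≤ 1 := by
      apply Real.exp_le_one_iff.mpr
      nlinarith
    have hEpos : 0 < Real.exp (-(lam.re * τ)) := Real.exp_pos _
    have h1 : R0 * Real.exp (-(lam.re * τ)) ≤ 1 := by
      nlinarith [mul_nonneg (by linarith : (0:ℝ) ≤ 1 - R0) hEpos.le]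
    have hab : a * b ≤ δ * μ := by nlinarith [mul_pos hδ hμ]
    have haδ : a = δ := by nlinarith
    have hsq : (lam.re + δ)^2 + lam.im^2 = δ^2 := by
      have := Complex.sq_norm (lam + (δ:ℂ))
      rw [← ha'] at this
      rw [haδ] at this
      simp [Complex.normSq_apply] at this
      nlinarith [this]
    have hre0 : lam.re = 0 := by nlinarith [sq_nonneg lam.im]
    have him0 : lam.im = 0 := by nlinarith [sq_nonneg (lam.re + δ)]
    have hlam0 : lam = 0 := Complex.ext hre0 him0
    subst hlam0
    refine ⟨?_, rfl⟩
    simp [Complex.exp_zero] at heq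
    have : ((δ * μ : ℝ) : ℂ) = ((R0 * δ * μ : ℝ) : ℂ) := by push_cast; linear_combination heq
    have h2 : δ * μ = R0 * δ * μ := by exact_mod_cast this
    nlinarith [mul_pos hδ hμ]
  refine ⟨main, ?_⟩
  intro hlt lam heq
  by_contra h
  push_neg at h
  have := main lam heq h
  linarith [this.1]
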